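/- Let (Ω, F, μ) be a conditionally partitionable measure space, let p ∈ [1, ∞), let I be a countable set (|I| ≤ ℵ₀), and let τ : ℝ^I → ℝ. If τ preserves p-integrability over (Ω, F, μ), then there exist a finite subset J ⊆ I, nonnegative real numbers (λ_j)_{j∈J}, and a nonnegative real number k such that for every v ∈ ℝ^I one has |τ(v)| ≤ k + Σ_{j∈J} λ_j |v_j|. -/

import Mathlib

open MeasureTheory
open scoped ENNReal

universe u v

/-- `f ∈ L^p(μ)`: `f` is measurable and `∫ |f|^p dμ < ∞`. -/
def MemLpReal {Ω : Type u} [MeasurableSpace Ω] (μ : Measure Ω) (p : ℝ) (f : Ω → ℝ) : Prop :=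
  Measurable f ∧ ∫⁻ x, ENNReal.ofReal (|f x| ^ p) ∂μ < ⊤

/-- `τ` preserves `p`-integrability over the measure space `(Ω, μ)`. -/
def PreservesLpOver {I : Type v} (τ : (I → ℝ) → ℝ) (p : ℝ)
    (Ω : Type u) [MeasurableSpace Ω] (μ : Measure Ω) : Prop :=
  ∀ f : I → Ω → ℝ, (∀ i, MemLpReal μ p (f i)) →
    MemLpReal μ p fun x => τ fun i => f i x

/-- A measure space is conditionally partitionable if there is a sequence of strictly
positive reals `b` such that every sequence of nonnegative reals dominated by `b` is
attained as the measures of a sequence of pairwise disjoint measurable sets. -/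
def CondPartitionable {Ω : Type u} [MeasurableSpace Ω] (μ : Measure Ω) : Prop :=
  ∃ b : ℕ → ℝ, (∀ n, 0 < b n) ∧
    ∀ a : ℕ → ℝ, (∀ n, 0 ≤ a n) → (∀ n, a n ≤ b n) → ∃ A : ℕ → Set Ω,
      (∀ n, MeasurableSet (A n)) ∧ (∀ m n, m ≠ n → Disjoint (A m) (A n)) ∧
      ∀ n, μ (A n) = ENNReal.ofReal (a n)

theorem preservesLpOver_condPartitionable_bound {Ω : Type u} [MeasurableSpace Ω]
    (μ : Measure Ω) (hpart : CondPartitionable μ) (p : ℝ) (hp : 1 ≤ p)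
    {I : Type v} [Countable I] (τ : (I → ℝ) → ℝ)
    (h : PreservesLpOver τ p Ω μ) :
    ∃ (J : Finset I) (lam : I → ℝ) (k : ℝ), (∀ j ∈ J, 0 ≤ lam j) ∧ 0 ≤ k ∧
      ∀ v : I → ℝ, |τ v| ≤ k + ∑ j ∈ J, lam j * |v j| := by
  classical
  by_contra hcon
  push_neg at hcon
  have hp0 : (0:ℝ) < p := lt_of_lt_of_le one_pos hp
  obtain ⟨b, hbpos, hb⟩ := hpart
  rcases isEmpty_or_nonempty I with hI | hI
  · obtain ⟨v, hv⟩ := hcon ∅ (fun _ => 0) |τ (fun _ => 0)|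
      (by simp) (abs_nonneg _)
    have hveq : v = fun _ => (0:ℝ) := funext fun i => isEmptyElim i
    rw [hveq] at hv
    simp at hv
  obtain ⟨e, he⟩ := exists_surjective_nat I
  -- the large constants
  set K : ℕ → ℝ := fun n => max (b n)⁻¹ ((2:ℝ)^n) + 1 with hK
  have hK1 : ∀ n, 1 ≤ K n := by
    intro n
    have h0 : (0:ℝ) ≤ max (b n)⁻¹ ((2:ℝ)^n) := le_max_of_le_right (by positivity)
    show (1:ℝ) ≤ max (b n)⁻¹ ((2:ℝ)^n) + 1
    linarith
  have hK0 : ∀ n, 0 ≤ K n := fun n => le_trans zero_le_one (hK1 n)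
  have hKp : ∀ n, K n ≤ K n ^ p := by
    intro n
    have := Real.rpow_le_rpow_of_exponent_le (hK1 n) hp
    rwa [Real.rpow_one] at this
  -- the index sets
  set J : ℕ → Finset I := fun n => (Finset.range n).image e with hJ
  -- counterexample vectors
  have hvex : ∀ n : ℕ, ∃ v : I → ℝ,
      K n + ∑ j ∈ J n, K n * |v j| < |τ v| := fun n =>
    hcon (J n) (fun _ => K n) (K n) (fun j _ => hK0 n) (hK0 n)
  choose v hv using hvex
  set T : ℕ → ℝ := fun n => |τ (v n)| with hT
  have hsum_nonneg : ∀ n, (0:ℝ) ≤ ∑ j ∈ J n, K n * |v n j| := fun n =>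
    Finset.sum_nonneg fun j _ => mul_nonneg (hK0 n) (abs_nonneg _)
  have hKT : ∀ n, K n < T n := fun n =>
    lt_of_le_of_lt (le_add_of_nonneg_right (hsum_nonneg n)) (hv n)
  have hT0 : ∀ n, 0 < T n := fun n => lt_of_lt_of_le (lt_of_lt_of_le one_pos (hK1 n)) (hKT n).le
  have hTp_pos : ∀ n, 0 < T n ^ p := fun n => Real.rpow_pos_of_pos (hT0 n) p
  -- the measures
  set a : ℕ → ℝ := fun n => (T n ^ p)⁻¹ with ha
  have ha0 : ∀ n, 0 ≤ a n := fun n => inv_nonneg.2 (hTp_pos n).le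
  have hKpT : ∀ n, K n ^ p ≤ T n ^ p := fun n =>
    Real.rpow_le_rpow (hK0 n) (hKT n).le hp0.le
  have hab : ∀ n, a n ≤ b n := by
    intro n
    have hbK : (b n)⁻¹ ≤ K n := by
      show (b n)⁻¹ ≤ max (b n)⁻¹ ((2:ℝ)^n) + 1
      have := le_max_left (b n)⁻¹ ((2:ℝ)^n)
      linarith
    have h1 : (b n)⁻¹ ≤ T n ^ p := le_trans hbK (le_trans (hKp n) (hKpT n))
    calc a n = (T n ^ p)⁻¹ := rfl
    _ ≤ ((b n)⁻¹)⁻¹ := inv_anti₀ (inv_pos.2 (hbpos n)) h1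
    _ = b n := inv_inv _
  obtain ⟨A, hAm, hAd, hAμ⟩ := hb a ha0 hab
  -- the test functions
  set f : I → Ω → ℝ := fun i x => ∑' n, (A n).indicator (fun _ => v n i) x with hf
  -- key pointwise evaluation lemmas
  have keymem : ∀ (M : Type) [AddCommMonoid M] [TopologicalSpace M] [T2Space M]
      (c : ℕ → M) (m : ℕ) (x : Ω), x ∈ A m →
      ∑' n, (A n).indicator (fun _ => c n) x = c m := by
    intro M _ _ _ c m x hx
    rw [tsum_eq_single m]
    · exact Set.indicator_of_mem hx _
    · intro n hn
      exact Set.indicator_of_notMem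
        (fun hxn => Set.disjoint_left.1 (hAd n m hn) hxn hx) _
  have keynot : ∀ (M : Type) [AddCommMonoid M] [TopologicalSpace M] [T2Space M]
      (c : ℕ → M) (x : Ω), x ∉ (⋃ n, A n) →
      ∑' n, (A n).indicator (fun _ => c n) x = 0 := by
    intro M _ _ _ c x hx
    have : ∀ n, (A n).indicator (fun _ => c n) x = 0 := fun n =>
      Set.indicator_of_notMem (fun hxn => hx (Set.mem_iUnion.2 ⟨n, hxn⟩)) _
    simp [this]
  -- each f i is measurable
  have hfmeas : ∀ i, Measurable (f i) := by
    intro i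
    apply measurable_of_tendsto_metrizable
      (f := fun N x => ∑ n ∈ Finset.range N, (A n).indicator (fun _ => v n i) x)
    · intro N
      exact Finset.measurable_sum _ fun n _ =>
        Measurable.indicator measurable_const (hAm n)
    · rw [tendsto_pi_nhds]
      intro x
      have hsumm : Summable fun n => (A n).indicator (fun _ => v n i) x := by
        by_cases hx : ∃ m, x ∈ A m
        · obtain ⟨m, hm⟩ := hx
          apply summable_of_ne_finset_zero (s := {m})
          intro n hn
          exact Set.indicator_of_notMem
            (fun hxn => Set.disjoint_left.1 (hAd n m (by simpa using hn)) hxn hm) _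
        · have : ∀ n, (A n).indicator (fun _ => v n i) x = 0 := fun n =>
            Set.indicator_of_notMem (fun hxn => hx ⟨n, hxn⟩) _
          simpa [funext this] using summable_zero
      exact hsumm.hasSum.tendsto_sum_nat
  -- each f i is in L^p
  have hfLp : ∀ i, MemLpReal μ p (f i) := by
    intro i
    refine ⟨hfmeas i, ?_⟩
    obtain ⟨m, hm⟩ := he i
    have hbound : ∀ x, ENNReal.ofReal (|f i x| ^ p) ≤
        ∑' n, (A n).indicator (fun _ => ENNReal.ofReal (|v n i| ^ p)) x := by
      intro x
      by_cases hx : x ∈ ⋃ n, A n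
      · obtain ⟨n, hn⟩ := Set.mem_iUnion.1 hx
        rw [keymem ENNReal _ n x hn]
        have hfx : f i x = v n i := keymem ℝ _ n x hn
        rw [hfx]
      · rw [keynot ENNReal _ x hx]
        have hfx0 : f i x = 0 := keynot ℝ _ x hx
        simp [hfx0, Real.zero_rpow hp0.ne']
    calc ∫⁻ x, ENNReal.ofReal (|f i x| ^ p) ∂μ
        ≤ ∫⁻ x, ∑' n, (A n).indicator (fun _ => ENNReal.ofReal (|v n i| ^ p)) x ∂μ :=
          lintegral_mono hbound
      _ = ∑' n, ∫⁻ x, (A n).indicator (fun _ => ENNReal.ofReal (|v n i| ^ p)) x ∂μ :=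
          lintegral_tsum fun n =>
            (Measurable.indicator measurable_const (hAm n)).aemeasurable
      _ = ∑' n, ENNReal.ofReal (|v n i| ^ p) * ENNReal.ofReal (a n) := by
          congr 1; funext n
          rw [lintegral_indicator_const (hAm n), hAμ n]
      _ < ⊤ := by
          -- split off the first m+1 terms
          have hterm : ∀ n, m + 1 ≤ n →
              ENNReal.ofReal (|v n i| ^ p) * ENNReal.ofReal (a n) ≤
              ENNReal.ofReal (((2:ℝ)^n)⁻¹) := by
            intro n hn
            have hiJ : i ∈ J n := by
              simp only [hJ, Finset.mem_image]
              exact ⟨m, Finset.mem_range.2 (by omega), hm⟩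
            have h1 : K n * |v n i| ≤ ∑ j ∈ J n, K n * |v n j| :=
              Finset.single_le_sum (fun j _ => mul_nonneg (hK0 n) (abs_nonneg _)) hiJ
            have h2 : K n * |v n i| < T n := lt_of_le_of_lt h1
              (lt_of_le_of_lt (le_add_of_nonneg_left (hK0 n)) (hv n))
            have hKn_pos : 0 < K n := lt_of_lt_of_le one_pos (hK1 n)
            have h3 : |v n i| ≤ T n / K n := by
              rw [le_div_iff₀ hKn_pos]; linarith [h2]
            have h4 : |v n i| ^ p ≤ (T n / K n) ^ p :=
              Real.rpow_le_rpow (abs_nonneg _) h3 hp0.le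
            have h5 : (T n / K n) ^ p = T n ^ p / K n ^ p :=
              Real.div_rpow (hT0 n).le (hK0 n) p
            have hKp_pos : 0 < K n ^ p := Real.rpow_pos_of_pos hKn_pos p
            have h6 : |v n i| ^ p * a n ≤ (K n ^ p)⁻¹ := by
              rw [ha]
              calc |v n i| ^ p * (T n ^ p)⁻¹ ≤ (T n ^ p / K n ^ p) * (T n ^ p)⁻¹ := by
                    apply mul_le_mul_of_nonneg_right _ (inv_nonneg.2 (hTp_pos n).le)
                    rw [← h5]; exact h4
                _ = (K n ^ p)⁻¹ := by
                    rw [div_eq_mul_inv, mul_right_comm, mul_inv_cancel₀ (hTp_pos n).ne',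
                      one_mul]
            have h7 : (K n ^ p)⁻¹ ≤ ((2:ℝ)^n)⁻¹ := by
              apply inv_anti₀ (by positivity)
              calc (2:ℝ)^n ≤ K n := by
                    show (2:ℝ)^n ≤ max (b n)⁻¹ ((2:ℝ)^n) + 1
                    have := le_max_right (b n)⁻¹ ((2:ℝ)^n)
                    linarith
                _ ≤ K n ^ p := hKp n
            rw [← ENNReal.ofReal_mul (by positivity)]
            exact ENNReal.ofReal_le_ofReal (le_trans h6 h7)
          have hgeom : (∑' n : ℕ, ENNReal.ofReal (((2:ℝ)^n)⁻¹)) < ⊤ := by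
            have heq : ∀ n : ℕ, ENNReal.ofReal (((2:ℝ)^n)⁻¹) = (2⁻¹ : ℝ≥0∞)^n := by
              intro n
              rw [← inv_pow, ENNReal.ofReal_pow (by norm_num),
                ENNReal.ofReal_inv_of_pos (by norm_num), ENNReal.ofReal_ofNat]
            simp only [heq]
            rw [ENNReal.tsum_geometric]
            rw [ENNReal.one_sub_inv_two]
            simp
          -- final bound
          set t : ℕ → ℝ≥0∞ := fun n =>
            ENNReal.ofReal (|v n i| ^ p) * ENNReal.ofReal (a n) with ht
          set F : ℕ → ℝ≥0∞ := fun n => if n ≤ m then t n else 0 with hF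
          have hsplit : ∑' n, t n ≤
              (∑' n, F n) + ∑' n : ℕ, ENNReal.ofReal (((2:ℝ)^n)⁻¹) := by
            rw [← ENNReal.tsum_add]
            apply ENNReal.tsum_le_tsum
            intro n
            by_cases hn : n ≤ m
            · simp only [hF, if_pos hn]
              exact le_add_of_le_of_nonneg le_rfl zero_le
            · simp only [hF, if_neg hn]
              rw [zero_add]
              exact hterm n (by omega)
          apply lt_of_le_of_lt hsplit
          apply ENNReal.add_lt_top.2
          constructor
          · rw [tsum_eq_sum (s := Finset.range (m+1))
              (fun n hn => by
                have hnm : ¬ n ≤ m := by simp only [Finset.mem_range] at hn; omega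
                simp only [hF, if_neg hnm])]
            apply ENNReal.sum_lt_top.2
            intro n _
            simp only [hF]
            split
            · exact ENNReal.mul_lt_top ENNReal.ofReal_lt_top ENNReal.ofReal_lt_top
            · exact ENNReal.zero_lt_top
          · exact hgeom
  -- but τ ∘ f is not in L^p
  obtain ⟨hGmeas, hGint⟩ := h f hfLp
  have hdiv : (∫⁻ x, ENNReal.ofReal (|τ fun i => f i x| ^ p) ∂μ) = ⊤ := by
    have hge : ∀ x, (∑' n, (A n).indicator (fun _ => ENNReal.ofReal (T n ^ p)) x) ≤
        ENNReal.ofReal (|τ fun i => f i x| ^ p) := by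
      intro x
      by_cases hx : x ∈ ⋃ n, A n
      · obtain ⟨n, hn⟩ := Set.mem_iUnion.1 hx
        rw [keymem ENNReal _ n x hn]
        have hfv : (fun i => f i x) = v n := funext fun i => keymem ℝ _ n x hn
        rw [hfv]
      · rw [keynot ℝ≥0∞ _ x hx]
        exact zero_le
    have : (∫⁻ x, ∑' n, (A n).indicator (fun _ => ENNReal.ofReal (T n ^ p)) x ∂μ) = ⊤ := by
      rw [lintegral_tsum fun n =>
        (Measurable.indicator measurable_const (hAm n)).aemeasurable]
      have : ∀ n, ∫⁻ x, (A n).indicator (fun _ => ENNReal.ofReal (T n ^ p)) x ∂μ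
          = 1 := by
        intro n
        rw [lintegral_indicator_const (hAm n), hAμ n,
          ← ENNReal.ofReal_mul (hTp_pos n).le]
        rw [ha]
        rw [mul_inv_cancel₀ (hTp_pos n).ne']
        simp
      simp [this, ENNReal.tsum_const_eq_top_of_ne_zero]
    exact top_le_iff.1 (this ▸ lintegral_mono hge)
  rw [hdiv] at hGint
  exact absurd hGint (lt_irrefl ⊤)
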